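/- The series Σ_{k=1}^∞ a_k T_{p_k,q_k}(x) converges uniformly on ℝ, and its sum f is a continuous function on ℝ with period 2π. -/

import Mathlib

open Finset Real Filter

/-- The trigonometric polynomial `T_{p,q}(x) = Σ_{m=1}^p cos((q−m)x)/m − Σ_{m=1}^p cos((q+m)x)/m`. -/
noncomputable def T (p q : ℕ) (x : ℝ) : ℝ :=
  (∑ m ∈ Finset.Icc 1 p, Real.cos (((q : ℝ) - (m : ℝ)) * x) / (m : ℝ))
    - ∑ m ∈ Finset.Icc 1 p, Real.cos (((q : ℝ) + (m : ℝ)) * x) / (m : ℝ)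

/-- Partial sums of `sin (m x) / m`. -/
noncomputable def Ssin (p : ℕ) (x : ℝ) : ℝ :=
  ∑ m ∈ Finset.Icc 1 p, Real.sin ((m : ℝ) * x) / (m : ℝ)

lemma dirichlet (x : ℝ) (n : ℕ) :
    ∑ i ∈ Finset.range n, 2 * Real.sin (x / 2) * Real.sin ((i : ℝ) * x)
      = Real.cos (x / 2) - Real.cos (((n : ℝ) - 1 / 2) * x) := by
  induction n with
  | zero =>
      rw [Finset.sum_range_zero, show (((0 : ℕ) : ℝ) - 1 / 2) * x = -(x / 2) by push_cast; ring,
        Real.cos_neg, sub_self]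
  | succ n ih =>
      rw [Finset.sum_range_succ, ih]
      have h : Real.cos (((n : ℝ) - 1 / 2) * x) - Real.cos (((n : ℝ) + 1 / 2) * x)
          = 2 * Real.sin (x / 2) * Real.sin ((n : ℝ) * x) := by
        rw [Real.cos_sub_cos,
          show ((((n : ℝ) - 1 / 2) * x + ((n : ℝ) + 1 / 2) * x) / 2) = (n : ℝ) * x by ring,
          show ((((n : ℝ) - 1 / 2) * x - ((n : ℝ) + 1 / 2) * x) / 2) = -(x / 2) by ring,
          Real.sin_neg]
        ring
      rw [show (((n + 1 : ℕ) : ℝ) - 1 / 2) * x = ((n : ℝ) + 1 / 2) * x by push_cast; ring]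
      linarith

lemma G_bound {x : ℝ} (hs : 0 < Real.sin (x / 2)) (n : ℕ) :
    |∑ i ∈ Finset.range n, Real.sin ((i : ℝ) * x)| ≤ 1 / Real.sin (x / 2) := by
  have h : 2 * Real.sin (x / 2) * ∑ i ∈ Finset.range n, Real.sin ((i : ℝ) * x)
      = Real.cos (x / 2) - Real.cos (((n : ℝ) - 1 / 2) * x) := by
    rw [Finset.mul_sum]; exact dirichlet x n
  have h2 : |2 * Real.sin (x / 2) * ∑ i ∈ Finset.range n, Real.sin ((i : ℝ) * x)| ≤ 2 := by
    rw [h, abs_sub_le_iff]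
    constructor <;>
      nlinarith [Real.cos_le_one (x / 2), Real.neg_one_le_cos (x / 2),
        Real.cos_le_one (((n : ℝ) - 1 / 2) * x), Real.neg_one_le_cos (((n : ℝ) - 1 / 2) * x)]
  rw [abs_mul, abs_mul, abs_of_pos hs] at h2
  rw [le_div_iff₀ hs]
  have : |(2 : ℝ)| = 2 := by norm_num
  rw [this] at h2
  nlinarith [abs_nonneg (∑ i ∈ Finset.range n, Real.sin ((i : ℝ) * x))]


lemma tele (f : ℕ → ℝ) (a b : ℕ) (hab : a ≤ b + 1) :
    ∑ i ∈ Finset.Icc a b, (f i - f (i + 1)) = f a - f (b + 1) := by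
  rw [← Finset.Ico_add_one_right_eq_Icc, Finset.sum_Ico_eq_sum_range]
  have : ∀ k, f (a + k) - f (a + k + 1) = (fun j => f (a + j)) k - (fun j => f (a + j)) (k + 1) := by
    intro k; simp [Nat.add_assoc]
  simp_rw [this]
  rw [Finset.sum_range_sub' (fun j => f (a + j))]
  congr 2
  omega

lemma abs_sin_le_self {t : ℝ} (ht : 0 ≤ t) : |Real.sin t| ≤ t := by
  rcases le_or_gt t 1 with h | h
  · rw [abs_of_nonneg (Real.sin_nonneg_of_nonneg_of_le_pi ht
      (h.trans (by nlinarith [Real.pi_gt_three])))]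
    exact Real.sin_le ht
  · exact (Real.abs_sin_le_one t).trans h.le

lemma Ssin_bound_pos {x : ℝ} (hx : 0 < x) (hxpi : x ≤ π) (p : ℕ) :
    |Ssin p x| ≤ 1 + 3 * π := by
  have hpi := Real.pi_pos
  have hs : 0 < Real.sin (x / 2) :=
    Real.sin_pos_of_pos_of_lt_pi (by linarith) (by linarith)
  have hsx : x / π ≤ Real.sin (x / 2) := by
    have h := Real.mul_le_sin (x := x / 2) (by linarith) (by linarith)
    calc x / π = 2 / π * (x / 2) := by ring
    _ ≤ _ := h
  set M := 1 / Real.sin (x / 2) with hM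
  have hM0 : 0 ≤ M := by positivity
  have hMx : M * x ≤ π := by
    rw [hM, div_mul_eq_mul_div, one_mul, div_le_iff₀ hs]
    rw [div_le_iff₀ hpi] at hsx
    nlinarith
  set N := ⌊1 / x⌋₊ with hN
  have hNx : (N : ℝ) * x ≤ 1 := by
    have h := Nat.floor_le (le_of_lt (show (0:ℝ) < 1 / x by positivity))
    calc (N : ℝ) * x ≤ 1 / x * x := by nlinarith
    _ = 1 := by field_simp
  have hN1 : 1 / ((N : ℝ) + 1) ≤ x := by
    have h := Nat.lt_floor_add_one (1 / x)
    rw [div_le_iff₀ (by positivity)]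
    rw [div_lt_iff₀ hx] at h
    nlinarith
  have hhead : ∀ n : ℕ, n ≤ N → |∑ i ∈ Finset.Icc 1 n, Real.sin ((i:ℝ) * x) / (i:ℝ)| ≤ 1 := by
    intro n hn
    calc |∑ i ∈ Finset.Icc 1 n, Real.sin ((i:ℝ) * x) / (i:ℝ)|
        ≤ ∑ i ∈ Finset.Icc 1 n, |Real.sin ((i:ℝ) * x) / (i:ℝ)| :=
          Finset.abs_sum_le_sum_abs _ _
      _ ≤ ∑ _i ∈ Finset.Icc 1 n, x := by
          refine Finset.sum_le_sum fun i hi => ?_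
          have hi1 : 1 ≤ i := (Finset.mem_Icc.1 hi).1
          have hip : (0:ℝ) < (i:ℝ) := by exact_mod_cast hi1
          rw [abs_div, abs_of_pos hip, div_le_iff₀ hip]
          calc |Real.sin ((i:ℝ) * x)| ≤ (i:ℝ) * x := abs_sin_le_self (by positivity)
          _ = x * (i:ℝ) := by ring
      _ = (n : ℝ) * x := by
          rw [Finset.sum_const, Nat.card_Icc]
          simp [nsmul_eq_mul]
      _ ≤ (N : ℝ) * x := by
          have hnN : (n:ℝ) ≤ (N:ℝ) := by exact_mod_cast hn
          nlinarith
      _ ≤ 1 := hNx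
  rcases le_or_gt p N with hpN | hNp
  · exact le_trans (hhead p hpN) (by nlinarith)
  · have hsplit : Ssin p x = (∑ i ∈ Finset.Icc 1 N, Real.sin ((i:ℝ) * x) / (i:ℝ))
        + ∑ i ∈ Finset.Ioc N p, Real.sin ((i:ℝ) * x) / (i:ℝ) := by
      unfold Ssin
      rw [show Finset.Icc 1 p = Finset.Ioc 0 p from Finset.Icc_add_one_left_eq_Ioc 0 p,
        show Finset.Icc 1 N = Finset.Ioc 0 N from Finset.Icc_add_one_left_eq_Ioc 0 N,
        Finset.sum_Ioc_consecutive _ (Nat.zero_le N) (le_of_lt hNp)]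
    have htail : |∑ i ∈ Finset.Ioc N p, Real.sin ((i:ℝ) * x) / (i:ℝ)| ≤ 3 * π := by
      have hBP := Finset.sum_Ioc_by_parts (fun i : ℕ => ((i : ℝ))⁻¹)
        (fun i : ℕ => Real.sin ((i:ℝ) * x)) hNp
      simp only [smul_eq_mul] at hBP
      have hsum_eq : (∑ i ∈ Finset.Ioc N p, Real.sin ((i:ℝ) * x) / (i:ℝ))
          = ∑ i ∈ Finset.Ioc N p, ((i:ℝ))⁻¹ * Real.sin ((i:ℝ) * x) :=
        Finset.sum_congr rfl fun i _ => by rw [div_eq_mul_inv, mul_comm]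
      rw [hsum_eq, hBP]
      have hG : ∀ n : ℕ, |∑ i ∈ Finset.range n, Real.sin ((i:ℝ) * x)| ≤ M :=
        fun n => G_bound hs n
      have hpNR : (N:ℝ) + 1 ≤ (p:ℝ) := by exact_mod_cast hNp
      have hppos : (0:ℝ) < (p:ℝ) := by linarith [Nat.cast_nonneg (α := ℝ) N]
      have hinvN : (((N:ℝ)) + 1)⁻¹ ≤ x := by rw [← one_div]; exact hN1
      have hinvp : ((p:ℝ))⁻¹ ≤ x := by
        have h1 : ((p:ℝ))⁻¹ ≤ (((N:ℝ)) + 1)⁻¹ :=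
          inv_anti₀ (by positivity) hpNR
        linarith
      set A := ((p:ℝ))⁻¹ * ∑ i ∈ Finset.range (p+1), Real.sin ((i:ℝ) * x) with hA0
      set B := (((N+1 : ℕ):ℝ))⁻¹ * ∑ i ∈ Finset.range (N+1), Real.sin ((i:ℝ) * x) with hB0
      have hA : |A| ≤ x * M := by
        rw [hA0, abs_mul, abs_of_nonneg (by positivity : (0:ℝ) ≤ ((p:ℝ))⁻¹)]
        exact mul_le_mul hinvp (hG _) (abs_nonneg _) (le_of_lt hx)
      have hB : |B| ≤ x * M := by
        rw [hB0, abs_mul, abs_of_nonneg (by positivity : (0:ℝ) ≤ (((N+1 : ℕ):ℝ))⁻¹)]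
        refine mul_le_mul ?_ (hG _) (abs_nonneg _) (le_of_lt hx)
        push_cast
        exact hinvN
      set C := ∑ i ∈ Finset.Ioc N (p-1),
        ((((i+1 : ℕ):ℝ))⁻¹ - ((i:ℝ))⁻¹) * ∑ j ∈ Finset.range (i+1), Real.sin ((j:ℝ) * x) with hC0
      have hC : |C| ≤ x * M := by
        have step1 : |C| ≤ ∑ i ∈ Finset.Ioc N (p-1),
            (((i:ℝ))⁻¹ - (((i+1 : ℕ):ℝ))⁻¹) * M := by
          refine (Finset.abs_sum_le_sum_abs _ _).trans (Finset.sum_le_sum fun i hi => ?_)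
          have hi1 : 1 ≤ i := by have := (Finset.mem_Ioc.1 hi).1; omega
          have hipos : (0:ℝ) < (i:ℝ) := by exact_mod_cast hi1
          have hmono : (((i+1 : ℕ):ℝ))⁻¹ ≤ ((i:ℝ))⁻¹ := by
            apply inv_anti₀ hipos
            push_cast; linarith
          rw [abs_mul, abs_of_nonpos (by linarith), neg_sub]
          exact mul_le_mul le_rfl (hG _) (abs_nonneg _) (by linarith)
        have step2 : ∑ i ∈ Finset.Ioc N (p-1), (((i:ℝ))⁻¹ - (((i+1 : ℕ):ℝ))⁻¹)
            = (((N+1 : ℕ):ℝ))⁻¹ - ((p:ℝ))⁻¹ := by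
          rw [← Finset.Icc_add_one_left_eq_Ioc]
          have := tele (fun i : ℕ => ((i:ℝ))⁻¹) (N+1) (p-1) (by omega)
          rw [show p - 1 + 1 = p by omega] at this
          exact this
        have step3 : ∑ i ∈ Finset.Ioc N (p-1), (((i:ℝ))⁻¹ - (((i+1 : ℕ):ℝ))⁻¹) ≤ x := by
          rw [step2]
          have : (0:ℝ) ≤ ((p:ℝ))⁻¹ := by positivity
          push_cast
          linarith
        calc |C| ≤ _ := step1
        _ = (∑ i ∈ Finset.Ioc N (p-1), (((i:ℝ))⁻¹ - (((i+1 : ℕ):ℝ))⁻¹)) * M := by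
            rw [Finset.sum_mul]
        _ ≤ x * M := mul_le_mul_of_nonneg_right step3 hM0
      have h1 := le_abs_self A; have h2 := neg_abs_le A
      have h3 := le_abs_self B; have h4 := neg_abs_le B
      have h5 := le_abs_self C; have h6 := neg_abs_le C
      have habs : |A - B - C| ≤ 3 * (x * M) := abs_le.mpr ⟨by linarith, by linarith⟩
      calc |A - B - C| ≤ 3 * (x * M) := habs
      _ ≤ 3 * π := by nlinarith
    rw [hsplit]
    calc |_| ≤ _ := abs_add_le _ _
    _ ≤ 1 + 3 * π := add_le_add (hhead N le_rfl) htail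

lemma Ssin_bound (p : ℕ) (x : ℝ) : |Ssin p x| ≤ 1 + 3 * π := by
  have hpi := Real.pi_pos
  set k : ℤ := ⌊x / (2 * π)⌋ with hk
  set y := x - (k : ℝ) * (2 * π) with hy
  have hy0 : 0 ≤ y := Int.sub_floor_div_mul_nonneg x (by positivity)
  have hy2 : y < 2 * π := Int.sub_floor_div_mul_lt x (by positivity)
  have hxy : Ssin p x = Ssin p y := by
    unfold Ssin
    refine Finset.sum_congr rfl fun i _ => ?_
    congr 1
    rw [show (i : ℝ) * y = (i : ℝ) * x + ((-(i * k) : ℤ) : ℝ) * (2 * π) by push_cast; ring,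
      Real.sin_add_int_mul_two_pi]
  rw [hxy]
  rcases eq_or_lt_of_le hy0 with h0 | h0
  · have hzero : Ssin p y = 0 := by
      unfold Ssin
      rw [← h0]
      simp
    rw [hzero, abs_zero]
    positivity
  rcases le_or_gt y π with hyp | hyp
  · exact Ssin_bound_pos h0 hyp p
  · set z := 2 * π - y with hz
    have hz0 : 0 < z := by linarith
    have hzp : z ≤ π := by linarith
    have hneg : Ssin p y = - Ssin p z := by
      unfold Ssin
      rw [← Finset.sum_neg_distrib]
      refine Finset.sum_congr rfl fun i _ => ?_
      rw [show (i : ℝ) * y = ((i : ℤ) : ℝ) * (2 * π) - (i : ℝ) * z by push_cast; ring,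
        Real.sin_int_mul_two_pi_sub, neg_div]
    rw [hneg, abs_neg]
    exact Ssin_bound_pos hz0 hzp p

lemma T_eq (p q : ℕ) (x : ℝ) : T p q x = 2 * Real.sin ((q : ℝ) * x) * Ssin p x := by
  unfold T Ssin
  rw [Finset.mul_sum, ← Finset.sum_sub_distrib]
  refine Finset.sum_congr rfl fun m _ => ?_
  have h := Real.cos_sub_cos (((q : ℝ) - (m : ℝ)) * x) (((q : ℝ) + (m : ℝ)) * x)
  rw [show ((((q : ℝ) - (m : ℝ)) * x + ((q : ℝ) + (m : ℝ)) * x) / 2) = (q : ℝ) * x by ring,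
    show ((((q : ℝ) - (m : ℝ)) * x - ((q : ℝ) + (m : ℝ)) * x) / 2) = -((m : ℝ) * x) by ring,
    Real.sin_neg] at h
  rw [div_sub_div_same, h]
  ring

lemma T_bound (p q : ℕ) (x : ℝ) : |T p q x| ≤ 2 * (1 + 3 * π) := by
  rw [T_eq, abs_mul, abs_mul]
  have h1 : |(2 : ℝ)| = 2 := by norm_num
  have h2 := Real.abs_sin_le_one ((q : ℝ) * x)
  have h3 := Ssin_bound p x
  have h4 := abs_nonneg (Ssin p x)
  have h5 := abs_nonneg (Real.sin ((q : ℝ) * x))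
  have hpi := Real.pi_pos
  rw [h1]
  nlinarith

lemma T_cont (p q : ℕ) : Continuous (T p q) := by
  unfold T
  apply Continuous.sub <;>
  · apply continuous_finset_sum
    intro m _
    exact (Real.continuous_cos.comp (continuous_const.mul continuous_id)).div_const _

lemma T_per (p q : ℕ) (x : ℝ) : T p q (x + 2 * π) = T p q x := by
  rw [T_eq, T_eq]
  have hq : Real.sin ((q : ℝ) * (x + 2 * π)) = Real.sin ((q : ℝ) * x) := by
    rw [show (q : ℝ) * (x + 2 * π) = (q : ℝ) * x + (q : ℕ) * (2 * π) by push_cast; ring,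
      Real.sin_add_nat_mul_two_pi]
  have hS : Ssin p (x + 2 * π) = Ssin p x := by
    unfold Ssin
    refine Finset.sum_congr rfl fun i _ => ?_
    congr 1
    rw [show (i : ℝ) * (x + 2 * π) = (i : ℝ) * x + (i : ℕ) * (2 * π) by push_cast; ring,
      Real.sin_add_nat_mul_two_pi]
  rw [hq, hS]

theorem stmt_0 (p q : ℕ → ℕ) (a : ℕ → ℝ)
    (hpq : ∀ k, 1 < p k ∧ p k < q k)
    (hsep : ∀ k, q k + p k < q (k + 1) - p (k + 1))
    (hapos : ∀ k, 0 < a k)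
    (hsum : Summable a)
    (hliminf : 0 < Filter.liminf (fun k => a k * Real.log (p k)) Filter.atTop) :
    TendstoUniformly
        (fun (N : ℕ) (x : ℝ) => ∑ k ∈ Finset.range N, a k * T (p k) (q k) x)
        (fun x => ∑' k, a k * T (p k) (q k) x) Filter.atTop
      ∧ Continuous (fun x => ∑' k, a k * T (p k) (q k) x)
      ∧ ∀ x : ℝ, (∑' k, a k * T (p k) (q k) (x + 2 * Real.pi))
          = ∑' k, a k * T (p k) (q k) x := by
  have hb : ∀ (k : ℕ) (x : ℝ), ‖a k * T (p k) (q k) x‖ ≤ a k * (2 * (1 + 3 * π)) := by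
    intro k x
    rw [Real.norm_eq_abs, abs_mul, abs_of_pos (hapos k)]
    exact mul_le_mul_of_nonneg_left (T_bound _ _ _) (hapos k).le
  have hu : Summable fun k => a k * (2 * (1 + 3 * π)) := hsum.mul_right _
  have hU := tendstoUniformly_tsum_nat hu hb
  refine ⟨hU, ?_, ?_⟩
  · exact hU.continuous (Filter.Frequently.of_forall fun N =>
      continuous_finset_sum _ fun k _ => continuous_const.mul (T_cont _ _))
  · intro x
    exact tsum_congr fun k => by rw [T_per]
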